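/- The univariate q-Gaussian density integrates to one: for 1 < q < 3, μ_q ∈ ℝ, σ_q > 0, one has ∫_{-∞}^{∞} p_q(x) dx = 1. -/

import Mathlib

open MeasureTheory

/-- The Euler Beta function `B(a,b) = ∫₀¹ t^(a-1) (1-t)^(b-1) dt`. -/
noncomputable def Beta (a b : ℝ) : ℝ := ∫ t in (0:ℝ)..1, t ^ (a - 1) * (1 - t) ^ (b - 1)

/-- Normalization constant of the univariate q-Gaussian:
`Z_q = (σ_q²·(3-q)/(q-1))^(1/2) · B(1/2, (3-q)/(2(q-1)))`. -/
noncomputable def Zq (q σq : ℝ) : ℝ :=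
  (σq ^ 2 * (3 - q) / (q - 1)) ^ ((1 : ℝ) / 2) * Beta (1 / 2) ((3 - q) / (2 * (q - 1)))

/-- The univariate q-Gaussian density
`p_q(x) = (1/Z_q)·(1 - ((1-q)/(3-q))·(x-μ_q)²/σ_q²)^(1/(1-q))`. -/
noncomputable def pq (q μq σq x : ℝ) : ℝ :=
  (1 / Zq q σq) * (1 - ((1 - q) / (3 - q)) * (x - μq) ^ 2 / σq ^ 2) ^ (1 / (1 - q))

section Aux

lemma qg_image_sq_div : (fun x : ℝ => x^2/(1+x^2)) '' (Set.Ioi 0) = Set.Ioo (0:ℝ) 1 := by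
  ext t
  constructor
  · rintro ⟨x, hx, rfl⟩
    have hx0 : (0:ℝ) < x := hx
    have h1 : (0:ℝ) < 1 + x^2 := by positivity
    constructor
    · positivity
    · rw [div_lt_one h1]; nlinarith
  · rintro ⟨ht0, ht1⟩
    refine ⟨Real.sqrt (t/(1-t)), ?_, ?_⟩
    · have : 0 < t/(1-t) := by apply div_pos ht0; linarith
      exact Real.sqrt_pos.mpr this
    · have h1 : (0:ℝ) < 1 - t := by linarith
      have hnn : 0 ≤ t/(1-t) := by positivity
      show Real.sqrt (t/(1-t)) ^ 2 / (1 + Real.sqrt (t/(1-t)) ^ 2) = t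
      rw [Real.sq_sqrt hnn]
      field_simp
      ring

lemma qg_inj_sq_div : Set.InjOn (fun x : ℝ => x^2/(1+x^2)) (Set.Ioi 0) := by
  intro x hx y hy h
  simp only at h
  have hx0 : (0:ℝ) < x := hx
  have hy0 : (0:ℝ) < y := hy
  have h1 : (0:ℝ) < 1 + x^2 := by positivity
  have h2 : (0:ℝ) < 1 + y^2 := by positivity
  have : x^2 * (1+y^2) = y^2 * (1+x^2) := by
    field_simp at h; linarith
  have hxy : x^2 = y^2 := by nlinarith
  nlinarith

lemma qg_deriv_sq_div {x : ℝ} (_ : x ∈ Set.Ioi (0:ℝ)) :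
    HasDerivWithinAt (fun x : ℝ => x^2/(1+x^2)) (2*x/(1+x^2)^2) (Set.Ioi 0) x := by
  have h1 : (0:ℝ) < 1 + x^2 := by positivity
  have : HasDerivAt (fun x : ℝ => x^2/(1+x^2)) (2*x/(1+x^2)^2) x := by
    have hu : HasDerivAt (fun x : ℝ => x^2) (2*x) x := by
      simpa using (hasDerivAt_pow 2 x)
    have hv : HasDerivAt (fun x : ℝ => 1 + x^2) (2*x) x := by
      simpa using (hasDerivAt_pow 2 x).const_add 1
    have : HasDerivAt (fun y : ℝ => y^2/(1+y^2)) _ x := hu.div hv h1.ne'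
    convert this using 1
    ring
  exact this.hasDerivWithinAt

lemma qg_key_pt (p : ℝ) {x : ℝ} (hx : (0:ℝ) < x) :
    |2*x/(1+x^2)^2| * ((x^2/(1+x^2)) ^ ((1:ℝ)/2 - 1) * (1 - x^2/(1+x^2)) ^ (p - 1/2 - 1))
      = 2 * (1+x^2)^(-p) := by
  have hX : (0:ℝ) < 1 + x^2 := by positivity
  have habs : |2*x/(1+x^2)^2| = 2*x/(1+x^2)^2 := abs_of_pos (by positivity)
  have h1 : (x^2/(1+x^2)) ^ ((1:ℝ)/2 - 1) = (1+x^2)^((1:ℝ)/2) / x := by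
    rw [show ((1:ℝ)/2 - 1) = -(1/2) by norm_num, Real.rpow_neg (by positivity),
      Real.div_rpow (by positivity) hX.le, inv_div]
    congr 1
    rw [← Real.sqrt_eq_rpow, Real.sqrt_sq hx.le]
  have h2 : (1 - x^2/(1+x^2)) = (1+x^2)⁻¹ := by field_simp; ring
  rw [habs, h1, h2, Real.inv_rpow hX.le, ← Real.rpow_neg hX.le]
  rw [show (2:ℝ)*x/(1+x^2)^2 * ((1+x^2)^((1:ℝ)/2)/x * (1+x^2)^(-(p-1/2-1)))
      = 2 * ((1+x^2)^((1:ℝ)/2) * (1+x^2)^(-(p-1/2-1)) / (1+x^2)^2) by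
    field_simp]
  rw [← Real.rpow_add hX, ← Real.rpow_natCast (1+x^2) 2, ← Real.rpow_sub hX]
  norm_num
  congr 1; ring

lemma qg_beta_half (p : ℝ) :
    Beta (1/2) (p - 1/2) = ∫ x in Set.Ioi (0:ℝ), 2 * (1+x^2)^(-p) := by
  rw [Beta, intervalIntegral.integral_of_le zero_le_one,
    MeasureTheory.integral_Ioc_eq_integral_Ioo, ← qg_image_sq_div,
    integral_image_eq_integral_abs_deriv_smul measurableSet_Ioi
      (fun x hx => qg_deriv_sq_div hx) qg_inj_sq_div]
  refine setIntegral_congr_fun measurableSet_Ioi (fun x hx => ?_)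
  simp only [smul_eq_mul]
  exact qg_key_pt p hx

lemma qg_integrable_pow (p : ℝ) (hp : 1/2 < p) :
    Integrable (fun x : ℝ => (1+x^2)^(-p)) := by
  have h := integrable_rpow_neg_one_add_norm_sq (E := ℝ) (μ := volume) (r := 2*p)
    (by simp; linarith)
  simpa [Real.norm_eq_abs, sq_abs, neg_div, mul_div_assoc] using h

lemma qg_integral_even_eq (p : ℝ) (hp : 1/2 < p) :
    (∫ x : ℝ, (1+x^2)^(-p)) = 2 * ∫ x in Set.Ioi (0:ℝ), (1+x^2)^(-p) := by
  have hint := qg_integrable_pow p hp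
  rw [← intervalIntegral.integral_Iic_add_Ioi (hint.integrableOn) (hint.integrableOn)]
  have : (∫ x in Set.Iic (0:ℝ), (1+x^2)^(-p)) = ∫ x in Set.Ioi (0:ℝ), (1+x^2)^(-p) := by
    rw [show Set.Iic (0:ℝ) = Set.Iic (-(0:ℝ)) by norm_num, ← integral_comp_neg_Ioi]
    simp [neg_sq]
  rw [this]; ring

lemma qg_integral_eq_beta (p : ℝ) (hp : 1/2 < p) :
    (∫ x : ℝ, (1+x^2)^(-p)) = Beta (1/2) (p - 1/2) := by
  rw [qg_integral_even_eq p hp, qg_beta_half p, MeasureTheory.integral_const_mul]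

end Aux

/-- For `1 < q < 3`, `μ_q ∈ ℝ`, `σ_q > 0`, the univariate q-Gaussian density
integrates to one. -/
theorem qGaussian_integral_eq_one (q μq σq : ℝ) (hq1 : 1 < q) (hq3 : q < 3) (hσ : 0 < σq) :
    (∫ x : ℝ, pq q μq σq x) = 1 := by
  have hq1' : (0:ℝ) < q - 1 := by linarith
  have hq3' : (0:ℝ) < 3 - q := by linarith
  set p : ℝ := 1/(q-1) with hp_def
  have hp : 1/2 < p := by
    rw [hp_def]
    rw [div_lt_div_iff₀ (by norm_num) hq1']
    linarith
  have hp0 : 0 < p := lt_trans (by norm_num) hp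
  set c : ℝ := σq * Real.sqrt ((3-q)/(q-1)) with hc_def
  have hc : 0 < c := by
    apply mul_pos hσ
    exact Real.sqrt_pos.mpr (div_pos hq3' hq1')
  have hc2 : c^2 = σq^2 * ((3-q)/(q-1)) := by
    rw [hc_def, mul_pow, Real.sq_sqrt (div_pos hq3' hq1').le]
  -- pointwise rewrite
  have hpt : ∀ x : ℝ, pq q μq σq x = (1 / Zq q σq) * (1 + ((x - μq)/c)^2)^(-p) := by
    intro x
    rw [pq]
    congr 1
    have hbase : 1 - ((1 - q) / (3 - q)) * (x - μq) ^ 2 / σq ^ 2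
        = 1 + ((x - μq)/c)^2 := by
      rw [div_pow, hc2]
      field_simp
      ring
    have hexp : 1/(1-q) = -p := by
      rw [hp_def]
      field_simp
      rw [div_eq_iff (by linarith : (1:ℝ)-q ≠ 0)]; ring
    rw [hbase, hexp]
  -- Beta value
  have hBeta : (∫ x : ℝ, (1+x^2)^(-p)) = Beta (1/2) ((3-q)/(2*(q-1))) := by
    rw [qg_integral_eq_beta p hp]
    congr 1
    rw [hp_def]
    field_simp
    ring
  -- positivity of Beta
  have hBpos : 0 < Beta (1/2) ((3-q)/(2*(q-1))) := by
    rw [← hBeta]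
    refine integral_pos_of_integrable_nonneg_nonzero (x := 0) ?_ (qg_integrable_pow p hp) ?_ ?_
    · exact (continuous_const.add (continuous_pow 2)).rpow_const
        (fun x => Or.inl (ne_of_gt (add_pos_of_pos_of_nonneg one_pos (sq_nonneg x))))
    · intro x; positivity
    · positivity
  -- Z_q = c * Beta
  have hZ : Zq q σq = c * Beta (1/2) ((3-q)/(2*(q-1))) := by
    rw [Zq]
    congr 1
    rw [mul_div_assoc, Real.mul_rpow (by positivity) (div_pos hq3' hq1').le,
      ← Real.sqrt_eq_rpow, ← Real.sqrt_eq_rpow, Real.sqrt_sq hσ.le]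
  -- assemble
  calc (∫ x : ℝ, pq q μq σq x)
      = ∫ x : ℝ, (1 / Zq q σq) * (1 + ((x - μq)/c)^2)^(-p) := by
        exact MeasureTheory.integral_congr_ae (Filter.Eventually.of_forall hpt)
    _ = (1 / Zq q σq) * ∫ x : ℝ, (1 + ((x - μq)/c)^2)^(-p) :=
        MeasureTheory.integral_const_mul _ _
    _ = (1 / Zq q σq) * ∫ x : ℝ, (1 + (x/c)^2)^(-p) := by
        rw [MeasureTheory.integral_sub_right_eq_self (fun y => (1 + (y/c)^2)^(-p)) μq]
    _ = (1 / Zq q σq) * (|c| • ∫ x : ℝ, (1 + x^2)^(-p)) := by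
        rw [MeasureTheory.Measure.integral_comp_div (fun y => (1 + y^2)^(-p)) c]
    _ = 1 := by
        rw [hBeta, smul_eq_mul, abs_of_pos hc, hZ]
        field_simp
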